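/- Let π be a log-concave probability density on ℝ^p with second moment μ₂ and, for α > 0, π_α ∝ π(θ)e^{-α‖θ‖₂²/2}. Suppose every coupling is constructed by keeping the common mass fixed and transporting (π-π_α)_+ to (π-π_α)_-. Then for q ≥ 1, W_q^q(π, π_α) ≤ α J_{q,α}(π) where J_{q,α}(π) = (1/2)∫_{‖θ‖₂² > r_α} (‖θ‖₂ + √r_α)^q (‖θ‖₂² - r_α) π(θ) dθ and r_α = (2/α) log(1/c_α) with c_α = E_π[e^{-α‖θ‖₂²/2}]. -/

import Mathlib

open MeasureTheory

/-- Wasserstein-q distance on ℝ^p, defined as an infimum over couplings. -/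
noncomputable def Wq {p : ℕ} (q : ℝ)
    (μ ν : Measure (EuclideanSpace ℝ (Fin p))) : ℝ :=
  sInf {c : ℝ | ∃ γ : Measure (EuclideanSpace ℝ (Fin p) × EuclideanSpace ℝ (Fin p)),
    γ.map Prod.fst = μ ∧ γ.map Prod.snd = ν ∧
    c = (∫ x, ‖x.1 - x.2‖ ^ q ∂γ) ^ (1 / q)}

set_option maxHeartbeats 1000000 in
/-- Let pd be a log-concave probability density on ℝ^p and, for
α > 0, pdα ∝ pd(θ)e^{-α‖θ‖²/2}. Then for q ≥ 1,
W_q^q(pd, pdα) ≤ α J_{q,α}(pd), where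
J_{q,α}(pd) = (1/2)∫_{‖θ‖² > r_α} (‖θ‖ + √r_α)^q (‖θ‖² - r_α) pd(θ) dθ,
r_α = (2/α) log(1/c_α) and c_α = E_{pd}[e^{-α‖θ‖²/2}]. -/
theorem stmt19 {p : ℕ} (pd pdα : EuclideanSpace ℝ (Fin p) → ℝ) (α q : ℝ)
    (hα : 0 < α) (hq : 1 ≤ q)
    (hpd_pos : ∀ θ, 0 < pd θ)
    (hconv : ConvexOn ℝ Set.univ (fun θ => -Real.log (pd θ)))
    (hpd_int : Integrable pd) (hpd_prob : ∫ θ, pd θ = 1)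
    (hpdα : ∀ θ, pdα θ = pd θ * Real.exp (-α * ‖θ‖ ^ 2 / 2)
      / ∫ θ', pd θ' * Real.exp (-α * ‖θ'‖ ^ 2 / 2))
    (hmom : Integrable (fun θ => ‖θ‖ ^ (q + 2) * pd θ))
    (hμ₂ : Integrable (fun θ => ‖θ‖ ^ 2 * pd θ)) :
    (Wq q (volume.withDensity (fun θ => ENNReal.ofReal (pd θ)))
        (volume.withDensity (fun θ => ENNReal.ofReal (pdα θ)))) ^ q
      ≤ α * ((1 / 2) *
          ∫ θ in {θ : EuclideanSpace ℝ (Fin p) |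
              (2 / α) * Real.log (1 / ∫ θ', pd θ' * Real.exp (-α * ‖θ'‖ ^ 2 / 2))
                < ‖θ‖ ^ 2},
            (‖θ‖ + Real.sqrt ((2 / α)
                * Real.log (1 / ∫ θ', pd θ' * Real.exp (-α * ‖θ'‖ ^ 2 / 2)))) ^ q
              * (‖θ‖ ^ 2
                - (2 / α) * Real.log (1 / ∫ θ', pd θ' * Real.exp (-α * ‖θ'‖ ^ 2 / 2)))
              * pd θ) := by
  classical
  have hq0 : (0:ℝ) < q := lt_of_lt_of_le one_pos hq
  -- abbreviations
  set c : ℝ := ∫ θ', pd θ' * Real.exp (-α * ‖θ'‖ ^ 2 / 2) with hc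
  set r : ℝ := (2 / α) * Real.log (1 / c) with hr
  set S : Set (EuclideanSpace ℝ (Fin p)) := {θ | r < ‖θ‖ ^ 2} with hSdef
  set ψ : EuclideanSpace ℝ (Fin p) → ℝ :=
    fun θ => (‖θ‖ + Real.sqrt r) ^ q * (‖θ‖ ^ 2 - r) * pd θ with hψdef
  -- continuity of pd
  have hpd_cont : Continuous pd := by
    have h1 : Continuous fun θ : EuclideanSpace ℝ (Fin p) => -Real.log (pd θ) :=
      continuousOn_univ.mp (ConvexOn.continuousOn isOpen_univ hconv)
    have h2 : Continuous fun θ : EuclideanSpace ℝ (Fin p) =>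
        Real.exp (-(-Real.log (pd θ))) := Real.continuous_exp.comp h1.neg
    refine h2.congr fun θ => ?_
    rw [neg_neg, Real.exp_log (hpd_pos θ)]
  have hE_cont : Continuous fun θ : EuclideanSpace ℝ (Fin p) =>
      Real.exp (-α * ‖θ‖ ^ 2 / 2) :=
    Real.continuous_exp.comp ((continuous_const.mul (continuous_norm.pow 2)).div_const 2)
  have hE_le_one : ∀ θ : EuclideanSpace ℝ (Fin p),
      Real.exp (-α * ‖θ‖ ^ 2 / 2) ≤ 1 := by
    intro θ
    rw [Real.exp_le_one_iff]
    have : 0 ≤ ‖θ‖ ^ 2 := sq_nonneg _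
    nlinarith
  -- integrability of pd * E and positivity of c
  have hint_pdE : Integrable fun θ : EuclideanSpace ℝ (Fin p) =>
      pd θ * Real.exp (-α * ‖θ‖ ^ 2 / 2) := by
    refine hpd_int.mono' ((hpd_cont.mul hE_cont).aestronglyMeasurable) ?_
    filter_upwards with θ
    rw [Real.norm_eq_abs,
      abs_of_nonneg (mul_nonneg (hpd_pos θ).le (Real.exp_nonneg _))]
    calc pd θ * Real.exp (-α * ‖θ‖ ^ 2 / 2) ≤ pd θ * 1 :=
          mul_le_mul_of_nonneg_left (hE_le_one θ) (hpd_pos θ).le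
      _ = pd θ := mul_one _
  have hc_pos : 0 < c := by
    rw [hc]
    rw [integral_pos_iff_support_of_nonneg_ae
      (Filter.Eventually.of_forall fun θ => mul_nonneg (hpd_pos θ).le (Real.exp_nonneg _)) hint_pdE]
    have hsupp : (Function.support fun θ : EuclideanSpace ℝ (Fin p) =>
        pd θ * Real.exp (-α * ‖θ‖ ^ 2 / 2)) = Set.univ := by
      ext θ; simp only [Function.mem_support, Set.mem_univ, iff_true]
      exact (mul_pos (hpd_pos θ) (Real.exp_pos _)).ne'
    rw [hsupp]
    exact isOpen_univ.measure_pos volume Set.univ_nonempty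
  have hc_le_one : c ≤ 1 := by
    rw [hc, ← hpd_prob]
    refine integral_mono hint_pdE hpd_int fun θ => ?_
    calc pd θ * Real.exp (-α * ‖θ‖ ^ 2 / 2) ≤ pd θ * 1 :=
          mul_le_mul_of_nonneg_left (hE_le_one θ) (hpd_pos θ).le
      _ = pd θ := mul_one _
  have hr_nonneg : 0 ≤ r := by
    rw [hr]
    exact mul_nonneg (by positivity) (Real.log_nonneg (one_le_one_div hc_pos hc_le_one))
  -- the key identity pdα = pd * exp(-(α/2)(‖θ‖² - r))
  have har : α / 2 * r = Real.log (1 / c) := by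
    rw [hr]; field_simp
  have hkey : ∀ θ, pdα θ = pd θ * Real.exp (-(α / 2) * (‖θ‖ ^ 2 - r)) := by
    intro θ
    rw [hpdα θ]
    have e1 : pd θ * Real.exp (-α * ‖θ‖ ^ 2 / 2) / c
        = pd θ * (Real.exp (-α * ‖θ‖ ^ 2 / 2) * Real.exp (Real.log (1 / c))) := by
      rw [Real.exp_log (by positivity : (0:ℝ) < 1 / c)]
      ring
    rw [e1, ← Real.exp_add]
    have e2 : -α * ‖θ‖ ^ 2 / 2 + Real.log (1 / c) = -(α / 2) * (‖θ‖ ^ 2 - r) := by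
      rw [← har]; ring
    rw [e2]
  have hpdα_pos : ∀ θ, 0 < pdα θ := fun θ => by
    rw [hkey θ]; exact mul_pos (hpd_pos θ) (Real.exp_pos _)
  have hpdα_cont : Continuous pdα := by
    have h1 : Continuous fun θ : EuclideanSpace ℝ (Fin p) =>
        pd θ * Real.exp (-(α / 2) * (‖θ‖ ^ 2 - r)) := by
      exact hpd_cont.mul (Real.continuous_exp.comp
        (continuous_const.mul ((continuous_norm.pow 2).sub continuous_const)))
    exact h1.congr fun θ => (hkey θ).symm
  -- f, g, m
  set f : EuclideanSpace ℝ (Fin p) → ℝ := fun θ => max (pd θ - pdα θ) 0 with hfdef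
  set g : EuclideanSpace ℝ (Fin p) → ℝ := fun θ => max (pdα θ - pd θ) 0 with hgdef
  set m : EuclideanSpace ℝ (Fin p) → ℝ := fun θ => min (pd θ) (pdα θ) with hmdef
  have hf_nonneg : ∀ θ, 0 ≤ f θ := fun θ => le_max_right _ _
  have hg_nonneg : ∀ θ, 0 ≤ g θ := fun θ => le_max_right _ _
  have hm_nonneg : ∀ θ, 0 ≤ m θ := fun θ => le_min (hpd_pos θ).le (hpdα_pos θ).le
  have hmf : ∀ θ, m θ + f θ = pd θ := by
    intro θ
    rcases le_total (pd θ) (pdα θ) with h | h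
    · rw [hmdef, hfdef]; simp only
      rw [min_eq_left h, max_eq_right (by linarith)]; ring
    · rw [hmdef, hfdef]; simp only
      rw [min_eq_right h, max_eq_left (by linarith)]; ring
  have hmg : ∀ θ, m θ + g θ = pdα θ := by
    intro θ
    rcases le_total (pd θ) (pdα θ) with h | h
    · rw [hmdef, hgdef]; simp only
      rw [min_eq_left h, max_eq_left (by linarith)]; ring
    · rw [hmdef, hgdef]; simp only
      rw [min_eq_right h, max_eq_right (by linarith)]; ring
  have hfg_sub : ∀ θ, f θ - g θ = pd θ - pdα θ := by
    intro θ
    rcases le_total (pd θ) (pdα θ) with h | h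
    · rw [hfdef, hgdef]; simp only
      rw [max_eq_right (by linarith), max_eq_left (by linarith)]; ring
    · rw [hfdef, hgdef]; simp only
      rw [max_eq_left (by linarith), max_eq_right (by linarith)]; ring
  -- sign facts
  have hg_zero : ∀ θ, r < ‖θ‖ ^ 2 → g θ = 0 := by
    intro θ hθ
    have hle : pdα θ ≤ pd θ := by
      rw [hkey θ]
      calc pd θ * Real.exp (-(α / 2) * (‖θ‖ ^ 2 - r)) ≤ pd θ * 1 := by
            refine mul_le_mul_of_nonneg_left ?_ (hpd_pos θ).le
            rw [Real.exp_le_one_iff]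
            nlinarith
        _ = pd θ := mul_one _
    rw [hgdef]; simp only
    rw [max_eq_right (by linarith)]
  have hf_zero : ∀ θ, ‖θ‖ ^ 2 ≤ r → f θ = 0 := by
    intro θ hθ
    have hle : pd θ ≤ pdα θ := by
      rw [hkey θ]
      nth_rewrite 1 [← mul_one (pd θ)]
      refine mul_le_mul_of_nonneg_left ?_ (hpd_pos θ).le
      rw [← Real.exp_zero]
      apply Real.exp_le_exp.mpr
      nlinarith
    rw [hfdef]; simp only
    rw [max_eq_right (by linarith)]
  have hf_le : ∀ θ, r < ‖θ‖ ^ 2 → f θ ≤ α / 2 * (‖θ‖ ^ 2 - r) * pd θ := by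
    intro θ hθ
    have hx : 0 ≤ α / 2 * (‖θ‖ ^ 2 - r) := by
      apply mul_nonneg (by positivity); linarith
    have hexp : 1 - Real.exp (-(α / 2) * (‖θ‖ ^ 2 - r)) ≤ α / 2 * (‖θ‖ ^ 2 - r) := by
      have h1 := Real.add_one_le_exp (-(α / 2 * (‖θ‖ ^ 2 - r)))
      have h2 : -(α / 2) * (‖θ‖ ^ 2 - r) = -(α / 2 * (‖θ‖ ^ 2 - r)) := by ring
      rw [h2]; linarith
    have hsub : pd θ - pdα θ ≤ α / 2 * (‖θ‖ ^ 2 - r) * pd θ := by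
      rw [hkey θ]
      have e3 : pd θ - pd θ * Real.exp (-(α / 2) * (‖θ‖ ^ 2 - r))
          = pd θ * (1 - Real.exp (-(α / 2) * (‖θ‖ ^ 2 - r))) := by ring
      rw [e3]
      calc pd θ * (1 - Real.exp (-(α / 2) * (‖θ‖ ^ 2 - r)))
          ≤ pd θ * (α / 2 * (‖θ‖ ^ 2 - r)) :=
            mul_le_mul_of_nonneg_left hexp (hpd_pos θ).le
        _ = α / 2 * (‖θ‖ ^ 2 - r) * pd θ := by ring
    rw [hfdef]; simp only
    exact max_le hsub (mul_nonneg hx (hpd_pos θ).le)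
  -- integrability facts
  have hpdα_int : Integrable pdα := by
    refine (hint_pdE.div_const c).congr ?_
    filter_upwards with θ
    rw [hpdα θ]
  have hf_int : Integrable f := (hpd_int.sub hpdα_int).pos_part
  have hg_int : Integrable g := (hpdα_int.sub hpd_int).pos_part
  have hpdα_prob : ∫ θ, pdα θ = 1 := by
    have e4 : ∫ θ, pdα θ = (∫ θ, pd θ * Real.exp (-α * ‖θ‖ ^ 2 / 2)) / c := by
      rw [← integral_div]
      exact integral_congr_ae (Filter.Eventually.of_forall fun θ => by rw [hpdα θ])
    rw [e4, div_self hc_pos.ne']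
  have hfg_int : ∫ θ, f θ = ∫ θ, g θ := by
    have h1 : ∫ θ, (f θ - g θ) = 0 := by
      have e5 : ∫ θ, (f θ - g θ) = ∫ θ, (pd θ - pdα θ) :=
        integral_congr_ae (Filter.Eventually.of_forall fun θ => hfg_sub θ)
      rw [e5, integral_sub hpd_int hpdα_int, hpd_prob, hpdα_prob, sub_self]
    have h2 : ∫ θ, (f θ - g θ) = (∫ θ, f θ) - ∫ θ, g θ := integral_sub hf_int hg_int
    linarith [h1, h2.symm]
  -- measurability
  have hf_cont : Continuous f := (hpd_cont.sub hpdα_cont).max continuous_const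
  have hg_cont : Continuous g := (hpdα_cont.sub hpd_cont).max continuous_const
  have hm_cont : Continuous m := hpd_cont.min hpdα_cont
  have hfm : Measurable fun θ => ENNReal.ofReal (f θ) :=
    hf_cont.measurable.ennreal_ofReal
  have hgm : Measurable fun θ => ENNReal.ofReal (g θ) :=
    hg_cont.measurable.ennreal_ofReal
  have hS_meas : MeasurableSet S := by
    rw [hSdef]
    exact measurableSet_lt measurable_const (continuous_norm.pow 2).measurable
  have hψ_cont : Continuous ψ := by
    have h1 : Continuous fun θ : EuclideanSpace ℝ (Fin p) =>
        (‖θ‖ + Real.sqrt r) ^ q * (‖θ‖ ^ 2 - r) * pd θ := by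
      exact (((continuous_norm.add continuous_const).rpow_const fun θ =>
        Or.inr (by linarith)).mul ((continuous_norm.pow 2).sub continuous_const)).mul hpd_cont
    exact h1
  -- measures
  set μ : Measure (EuclideanSpace ℝ (Fin p)) :=
    volume.withDensity (fun θ => ENNReal.ofReal (pd θ)) with hμdef
  set ν : Measure (EuclideanSpace ℝ (Fin p)) :=
    volume.withDensity (fun θ => ENNReal.ofReal (pdα θ)) with hνdef
  set M : Measure (EuclideanSpace ℝ (Fin p)) :=
    volume.withDensity (fun θ => ENNReal.ofReal (m θ)) with hMdef
  set F : Measure (EuclideanSpace ℝ (Fin p)) :=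
    volume.withDensity (fun θ => ENNReal.ofReal (f θ)) with hFdef
  set G : Measure (EuclideanSpace ℝ (Fin p)) :=
    volume.withDensity (fun θ => ENNReal.ofReal (g θ)) with hGdef
  haveI hF_fin : IsFiniteMeasure F := isFiniteMeasure_withDensity_ofReal hf_int.2
  haveI hG_fin : IsFiniteMeasure G := isFiniteMeasure_withDensity_ofReal hg_int.2
  haveI hM_fin : IsFiniteMeasure M :=
    isFiniteMeasure_withDensity_ofReal
      (hpd_int.mono' hm_cont.aestronglyMeasurable (Filter.Eventually.of_forall fun θ => by
        rw [Real.norm_eq_abs, abs_of_nonneg (hm_nonneg θ)]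
        exact min_le_left _ _)).2
  set C : ENNReal := F Set.univ with hCdef
  have hF_univ : F Set.univ = ENNReal.ofReal (∫ θ, f θ) := by
    rw [hFdef, withDensity_apply _ MeasurableSet.univ, setLIntegral_univ,
      ← ofReal_integral_eq_lintegral_ofReal hf_int
        (Filter.Eventually.of_forall hf_nonneg)]
  have hG_univ : G Set.univ = C := by
    rw [hGdef, withDensity_apply _ MeasurableSet.univ, setLIntegral_univ,
      ← ofReal_integral_eq_lintegral_ofReal hg_int
        (Filter.Eventually.of_forall hg_nonneg), ← hfg_int, hCdef, hF_univ]
  have hC_ne_top : C ≠ ⊤ := by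
    rw [hCdef, hF_univ]; exact ENNReal.ofReal_ne_top
  -- marginal identities
  have hdiag : Measurable fun θ : EuclideanSpace ℝ (Fin p) => (θ, θ) :=
    measurable_id.prodMk measurable_id
  have hMF : M + F = μ := by
    rw [hMdef, hFdef, hμdef, ← withDensity_add_right _ hfm]
    congr 1
    funext θ
    simp only [Pi.add_apply]
    rw [← ENNReal.ofReal_add (hm_nonneg θ) (hf_nonneg θ), hmf θ]
  have hMG : M + G = ν := by
    rw [hMdef, hGdef, hνdef, ← withDensity_add_right _ hgm]
    congr 1
    funext θ
    simp only [Pi.add_apply]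
    rw [← ENNReal.ofReal_add (hm_nonneg θ) (hg_nonneg θ), hmg θ]
  -- nonnegativity of the RHS integrand on S
  have hψ_nonneg : ∀ θ ∈ S, 0 ≤ ψ θ := by
    intro θ hθ
    have h1 : r < ‖θ‖ ^ 2 := hθ
    rw [hψdef]
    have h2 : (0:ℝ) ≤ (‖θ‖ + Real.sqrt r) ^ q :=
      Real.rpow_nonneg (by positivity) q
    have h3 : (0:ℝ) ≤ ‖θ‖ ^ 2 - r := by linarith
    exact mul_nonneg (mul_nonneg h2 h3) (hpd_pos θ).le
  have hRHS_nonneg : 0 ≤ α * (1 / 2 * ∫ θ in S, ψ θ) := by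
    have h1 : 0 ≤ ∫ θ in S, ψ θ := setIntegral_nonneg hS_meas hψ_nonneg
    apply mul_nonneg hα.le (mul_nonneg (by norm_num) h1)
  -- the distance function
  have hdist_cont : Continuous fun x :
      EuclideanSpace ℝ (Fin p) × EuclideanSpace ℝ (Fin p) => ‖x.1 - x.2‖ ^ q :=
    (continuous_fst.sub continuous_snd).norm.rpow_const fun x => Or.inr (by linarith)
  have hdist_meas : Measurable fun x :
      EuclideanSpace ℝ (Fin p) × EuclideanSpace ℝ (Fin p) => ‖x.1 - x.2‖ ^ q :=
    hdist_cont.measurable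
  have hdist_nonneg : ∀ x : EuclideanSpace ℝ (Fin p) × EuclideanSpace ℝ (Fin p),
      (0:ℝ) ≤ ‖x.1 - x.2‖ ^ q := fun x => Real.rpow_nonneg (norm_nonneg _) q
  -- lower bounds on the Wq set
  have hset_nonneg : ∀ x ∈ {c : ℝ |
      ∃ γ : Measure (EuclideanSpace ℝ (Fin p) × EuclideanSpace ℝ (Fin p)),
      γ.map Prod.fst = μ ∧ γ.map Prod.snd = ν ∧
      c = (∫ x, ‖x.1 - x.2‖ ^ q ∂γ) ^ (1 / q)}, (0:ℝ) ≤ x := by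
    rintro x ⟨γ, -, -, rfl⟩
    exact Real.rpow_nonneg (integral_nonneg hdist_nonneg) _
  have hWq_nonneg : 0 ≤ Wq q μ ν := by
    rw [Wq]
    exact Real.sInf_nonneg hset_nonneg
  have hWq_le_of_mem : ∀ γ : Measure (EuclideanSpace ℝ (Fin p) × EuclideanSpace ℝ (Fin p)),
      γ.map Prod.fst = μ → γ.map Prod.snd = ν →
      Wq q μ ν ≤ (∫ x, ‖x.1 - x.2‖ ^ q ∂γ) ^ (1 / q) := by
    intro γ h1 h2
    rw [Wq]
    exact csInf_le ⟨0, hset_nonneg⟩ ⟨γ, h1, h2, rfl⟩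
  -- main bound: Wq^q ≤ ∫ dist^q dγ for a coupling γ
  have hWq_pow : ∀ γ : Measure (EuclideanSpace ℝ (Fin p) × EuclideanSpace ℝ (Fin p)),
      γ.map Prod.fst = μ → γ.map Prod.snd = ν →
      Wq q μ ν ^ q ≤ ∫ x, ‖x.1 - x.2‖ ^ q ∂γ := by
    intro γ h1 h2
    have hI : (0:ℝ) ≤ ∫ x, ‖x.1 - x.2‖ ^ q ∂γ := integral_nonneg hdist_nonneg
    calc Wq q μ ν ^ q ≤ ((∫ x, ‖x.1 - x.2‖ ^ q ∂γ) ^ (1 / q)) ^ q :=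
          Real.rpow_le_rpow hWq_nonneg (hWq_le_of_mem γ h1 h2) (by linarith)
      _ = ∫ x, ‖x.1 - x.2‖ ^ q ∂γ := by
          rw [← Real.rpow_mul hI, one_div_mul_cancel hq0.ne', Real.rpow_one]
  by_cases hC0 : C = 0
  · -- degenerate case: pd = pdα a.e., use the diagonal coupling
    have hintf0 : ∫ θ, f θ = 0 := by
      have h1 : ENNReal.ofReal (∫ θ, f θ) = 0 := by rw [← hF_univ, ← hCdef, hC0]
      have h2 : 0 ≤ ∫ θ, f θ := integral_nonneg hf_nonneg
      have h3 := ENNReal.ofReal_eq_zero.mp h1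
      linarith
    have hf0 : f =ᵐ[volume] 0 :=
      (integral_eq_zero_iff_of_nonneg hf_nonneg hf_int).mp hintf0
    have hg0 : g =ᵐ[volume] 0 :=
      (integral_eq_zero_iff_of_nonneg hg_nonneg hg_int).mp (by rw [← hfg_int, hintf0])
    have hpp : (fun θ => ENNReal.ofReal (pdα θ)) =ᵐ[volume]
        (fun θ => ENNReal.ofReal (pd θ)) := by
      filter_upwards [hf0, hg0] with θ h1 h2
      have hfθ : max (pd θ - pdα θ) 0 = 0 := h1
      have hgθ : max (pdα θ - pd θ) 0 = 0 := h2
      have e1 : pd θ - pdα θ ≤ 0 := by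
        have h3 := le_max_left (pd θ - pdα θ) 0
        rw [hfθ] at h3; linarith
      have e2 : pdα θ - pd θ ≤ 0 := by
        have h3 := le_max_left (pdα θ - pd θ) 0
        rw [hgθ] at h3; linarith
      have e3 : pd θ = pdα θ := by linarith
      rw [e3]
    have hνμ : ν = μ := by rw [hνdef, hμdef]; exact withDensity_congr_ae hpp
    set γ0 : Measure (EuclideanSpace ℝ (Fin p) × EuclideanSpace ℝ (Fin p)) :=
      μ.map (fun θ => (θ, θ)) with hγ0def
    have hfst : γ0.map Prod.fst = μ := by
      rw [hγ0def, Measure.map_map measurable_fst hdiag]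
      rw [show (Prod.fst ∘ fun θ : EuclideanSpace ℝ (Fin p) => (θ, θ)) = id from rfl,
        Measure.map_id]
    have hsnd : γ0.map Prod.snd = ν := by
      rw [hγ0def, Measure.map_map measurable_snd hdiag]
      rw [show (Prod.snd ∘ fun θ : EuclideanSpace ℝ (Fin p) => (θ, θ)) = id from rfl,
        Measure.map_id, hνμ]
    have hint0 : ∫ x, ‖x.1 - x.2‖ ^ q ∂γ0 = 0 := by
      rw [hγ0def, integral_map hdiag.aemeasurable hdist_cont.aestronglyMeasurable]
      simp only [sub_self, norm_zero, Real.zero_rpow hq0.ne', integral_zero]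
    calc Wq q μ ν ^ q ≤ ∫ x, ‖x.1 - x.2‖ ^ q ∂γ0 := hWq_pow γ0 hfst hsnd
      _ = 0 := hint0
      _ ≤ α * (1 / 2 * ∫ θ in S, ψ θ) := hRHS_nonneg
  · -- main case
    set γ : Measure (EuclideanSpace ℝ (Fin p) × EuclideanSpace ℝ (Fin p)) :=
      M.map (fun θ => (θ, θ)) + C⁻¹ • (F.prod G) with hγdef
    have hfst : γ.map Prod.fst = μ := by
      rw [hγdef, Measure.map_add _ _ measurable_fst, Measure.map_smul,
        Measure.map_map measurable_fst hdiag, Measure.map_fst_prod, hG_univ,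
        smul_smul, ENNReal.inv_mul_cancel hC0 hC_ne_top, one_smul]
      rw [show (Prod.fst ∘ fun θ : EuclideanSpace ℝ (Fin p) => (θ, θ)) = id from rfl,
        Measure.map_id, hMF]
    have hsnd : γ.map Prod.snd = ν := by
      rw [hγdef, Measure.map_add _ _ measurable_snd, Measure.map_smul,
        Measure.map_map measurable_snd hdiag, Measure.map_snd_prod, ← hCdef,
        smul_smul, ENNReal.inv_mul_cancel hC0 hC_ne_top, one_smul]
      rw [show (Prod.snd ∘ fun θ : EuclideanSpace ℝ (Fin p) => (θ, θ)) = id from rfl,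
        Measure.map_id, hMG]
    refine le_trans (hWq_pow γ hfst hsnd) ?_
    -- pass to lintegrals
    have hIL : ∫ x, ‖x.1 - x.2‖ ^ q ∂γ
        = (∫⁻ x, ENNReal.ofReal (‖x.1 - x.2‖ ^ q) ∂γ).toReal :=
      integral_eq_lintegral_of_nonneg_ae
        (Filter.Eventually.of_forall hdist_nonneg) hdist_cont.aestronglyMeasurable
    rw [hIL]
    set h' : EuclideanSpace ℝ (Fin p) × EuclideanSpace ℝ (Fin p) → ENNReal :=
      fun x => ENNReal.ofReal (‖x.1 - x.2‖ ^ q) with hh'def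
    have hh'_meas : Measurable h' := hdist_meas.ennreal_ofReal
    -- lintegral over the diagonal part vanishes
    have hL1 : ∫⁻ x, h' x ∂(M.map (fun θ => (θ, θ))) = 0 := by
      rw [lintegral_map hh'_meas hdiag]
      have hz : ∀ θ : EuclideanSpace ℝ (Fin p), h' (θ, θ) = 0 := by
        intro θ
        rw [hh'def]
        simp only [sub_self, norm_zero, Real.zero_rpow hq0.ne', ENNReal.ofReal_zero]
      simp only [hz, lintegral_zero]
    -- bound the lintegral over the product part
    set φ : EuclideanSpace ℝ (Fin p) → ℝ := fun θ => (‖θ‖ + Real.sqrt r) ^ q with hφdef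
    have hφ_cont : Continuous φ :=
      (continuous_norm.add continuous_const).rpow_const fun θ => Or.inr (by linarith)
    have hφ_meas : Measurable φ := hφ_cont.measurable
    have hφ_nonneg : ∀ θ, 0 ≤ φ θ := fun θ => Real.rpow_nonneg (by positivity) q
    have hGball : G S = 0 := by
      rw [hGdef, withDensity_apply _ hS_meas]
      have hz : ∀ᵐ θ ∂volume, θ ∈ S → ENNReal.ofReal (g θ) = (0 : ENNReal) :=
        Filter.Eventually.of_forall fun θ hθ => by
          rw [hg_zero θ hθ, ENNReal.ofReal_zero]
      rw [setLIntegral_congr_fun_ae hS_meas hz]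
      simp
    have hae_ball : ∀ᵐ x ∂(F.prod G), ‖x.2‖ ^ 2 ≤ r := by
      rw [ae_iff]
      have hset : {x : EuclideanSpace ℝ (Fin p) × EuclideanSpace ℝ (Fin p) |
          ¬ ‖x.2‖ ^ 2 ≤ r} = Prod.snd ⁻¹' S := by
        ext x; simp [hSdef, not_le]
      rw [hset, Measure.prod_apply (measurable_snd hS_meas)]
      have hz : ∀ θ : EuclideanSpace ℝ (Fin p),
          G (Prod.mk θ ⁻¹' (Prod.snd ⁻¹' S)) = 0 := by
        intro θ
        rw [show (Prod.mk θ ⁻¹' (Prod.snd ⁻¹' S)) = S from rfl]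
        exact hGball
      simp only [hz, lintegral_zero]
    have hL2 : ∫⁻ x, h' x ∂(F.prod G)
        ≤ (∫⁻ θ, ENNReal.ofReal (φ θ) ∂F) * C := by
      have hbound : ∀ᵐ x ∂(F.prod G), h' x ≤ ENNReal.ofReal (φ x.1) := by
        filter_upwards [hae_ball] with x hx
        rw [hh'def, hφdef]
        apply ENNReal.ofReal_le_ofReal
        apply Real.rpow_le_rpow (norm_nonneg _) _ (by linarith)
        calc ‖x.1 - x.2‖ ≤ ‖x.1‖ + ‖x.2‖ := norm_sub_le _ _
          _ ≤ ‖x.1‖ + Real.sqrt r := by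
              have e6 : ‖x.2‖ = Real.sqrt (‖x.2‖ ^ 2) := (Real.sqrt_sq (norm_nonneg _)).symm
              rw [e6]
              exact add_le_add_right (Real.sqrt_le_sqrt hx) _
      calc ∫⁻ x, h' x ∂(F.prod G) ≤ ∫⁻ x, ENNReal.ofReal (φ x.1) ∂(F.prod G) :=
            lintegral_mono_ae hbound
        _ = ∫⁻ θ, ∫⁻ _, ENNReal.ofReal (φ θ) ∂G ∂F :=
            lintegral_prod _ ((hφ_meas.comp measurable_fst).ennreal_ofReal.aemeasurable)
        _ = ∫⁻ θ, ENNReal.ofReal (φ θ) * G Set.univ ∂F := by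
            simp only [lintegral_const]
        _ = (∫⁻ θ, ENNReal.ofReal (φ θ) ∂F) * C := by
            rw [hG_univ, lintegral_mul_const _ hφ_meas.ennreal_ofReal]
    -- the F-lintegral of φ is bounded by the set lintegral
    set B : ENNReal := ∫⁻ θ in S, ENNReal.ofReal (α / 2 * ψ θ) with hBdef
    have hKB : ∫⁻ θ, ENNReal.ofReal (φ θ) ∂F ≤ B := by
      rw [hFdef, lintegral_withDensity_eq_lintegral_mul _ hfm
        hφ_meas.ennreal_ofReal]
      rw [hBdef, ← lintegral_indicator hS_meas]
      apply lintegral_mono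
      intro θ
      simp only [Pi.mul_apply]
      by_cases hθ : θ ∈ S
      · rw [Set.indicator_of_mem hθ]
        have h1 : r < ‖θ‖ ^ 2 := hθ
        rw [← ENNReal.ofReal_mul (hf_nonneg θ)]
        apply ENNReal.ofReal_le_ofReal
        calc f θ * φ θ ≤ (α / 2 * (‖θ‖ ^ 2 - r) * pd θ) * φ θ :=
              mul_le_mul_of_nonneg_right (hf_le θ h1) (hφ_nonneg θ)
          _ = α / 2 * ψ θ := by rw [hψdef, hφdef]; ring
      · rw [Set.indicator_of_notMem hθ]
        have h1 : ‖θ‖ ^ 2 ≤ r := by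
          rw [hSdef] at hθ; simpa using hθ
        rw [hf_zero θ h1]
        simp
    -- integrability of ψ on S
    have hψ_meas : AEStronglyMeasurable ψ (volume.restrict S) :=
      hψ_cont.aestronglyMeasurable.restrict
    have hψ_int : IntegrableOn ψ S := by
      have hbd_int : Integrable (fun θ : EuclideanSpace ℝ (Fin p) =>
          (2:ℝ) ^ q * (‖θ‖ ^ (q + 2) * pd θ)
            + (2:ℝ) ^ q * Real.sqrt r ^ q * (‖θ‖ ^ 2 * pd θ)) :=
        (hmom.const_mul _).add (hμ₂.const_mul _)
      refine Integrable.mono' hbd_int.restrict hψ_meas ?_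
      rw [ae_restrict_iff' hS_meas]
      filter_upwards with θ hθ
      have h1 : r < ‖θ‖ ^ 2 := hθ
      have hn : 0 ≤ ‖θ‖ := norm_nonneg θ
      rw [Real.norm_eq_abs, abs_of_nonneg (hψ_nonneg θ hθ)]
      have hsplit : (‖θ‖ + Real.sqrt r) ^ q
          ≤ 2 ^ q * ‖θ‖ ^ q + 2 ^ q * Real.sqrt r ^ q := by
        rcases le_total ‖θ‖ (Real.sqrt r) with hcase | hcase
        · calc (‖θ‖ + Real.sqrt r) ^ q ≤ (2 * Real.sqrt r) ^ q := by
                apply Real.rpow_le_rpow (by positivity) (by linarith) (by linarith)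
            _ = 2 ^ q * Real.sqrt r ^ q :=
                Real.mul_rpow (by norm_num) (Real.sqrt_nonneg r)
            _ ≤ 2 ^ q * ‖θ‖ ^ q + 2 ^ q * Real.sqrt r ^ q := by
                have h5 : (0:ℝ) ≤ 2 ^ q * ‖θ‖ ^ q :=
                  mul_nonneg (Real.rpow_nonneg (by norm_num) q) (Real.rpow_nonneg hn q)
                linarith
        · calc (‖θ‖ + Real.sqrt r) ^ q ≤ (2 * ‖θ‖) ^ q := by
                apply Real.rpow_le_rpow (by positivity) (by linarith) (by linarith)
            _ = 2 ^ q * ‖θ‖ ^ q := Real.mul_rpow (by norm_num) hn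
            _ ≤ 2 ^ q * ‖θ‖ ^ q + 2 ^ q * Real.sqrt r ^ q := by
                have h5 : (0:ℝ) ≤ 2 ^ q * Real.sqrt r ^ q :=
                  mul_nonneg (Real.rpow_nonneg (by norm_num) q)
                    (Real.rpow_nonneg (Real.sqrt_nonneg r) q)
                linarith
      have hq2 : ‖θ‖ ^ q * ‖θ‖ ^ 2 = ‖θ‖ ^ (q + 2) := by
        by_cases h0 : ‖θ‖ = 0
        · rw [h0, Real.zero_rpow hq0.ne', Real.zero_rpow (by linarith : q + 2 ≠ 0)]
          ring
        · have hpos : 0 < ‖θ‖ := lt_of_le_of_ne hn (Ne.symm h0)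
          rw [← Real.rpow_natCast ‖θ‖ 2, ← Real.rpow_add hpos]
          norm_num
      have hsq : ‖θ‖ ^ 2 - r ≤ ‖θ‖ ^ 2 := by linarith
      calc ψ θ = (‖θ‖ + Real.sqrt r) ^ q * (‖θ‖ ^ 2 - r) * pd θ := by rw [hψdef]
        _ ≤ (2 ^ q * ‖θ‖ ^ q + 2 ^ q * Real.sqrt r ^ q) * (‖θ‖ ^ 2) * pd θ := by
            apply mul_le_mul_of_nonneg_right _ (hpd_pos θ).le
            apply mul_le_mul hsplit hsq (by linarith)
            positivity
        _ = 2 ^ q * (‖θ‖ ^ q * ‖θ‖ ^ 2 * pd θ)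
              + 2 ^ q * Real.sqrt r ^ q * (‖θ‖ ^ 2 * pd θ) := by ring
        _ = 2 ^ q * (‖θ‖ ^ (q + 2) * pd θ)
              + 2 ^ q * Real.sqrt r ^ q * (‖θ‖ ^ 2 * pd θ) := by rw [hq2]
    -- nonnegativity a.e. on S and the lintegral formula for the RHS
    have hψ_ae_nonneg : 0 ≤ᵐ[volume.restrict S] ψ :=
      (ae_restrict_iff' hS_meas).mpr (Filter.Eventually.of_forall fun θ hθ => hψ_nonneg θ hθ)
    have hRHS_eq : ∫ θ in S, ψ θ = (∫⁻ θ in S, ENNReal.ofReal (ψ θ)).toReal :=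
      integral_eq_lintegral_of_nonneg_ae hψ_ae_nonneg hψ_meas
    have hfin : ∫⁻ θ in S, ENNReal.ofReal (ψ θ) < ⊤ := hψ_int.lintegral_lt_top
    have hB_eq : B = ENNReal.ofReal (α / 2) * ∫⁻ θ in S, ENNReal.ofReal (ψ θ) := by
      rw [hBdef, ← lintegral_const_mul _ hψ_cont.measurable.ennreal_ofReal]
      apply lintegral_congr
      intro θ
      rw [← ENNReal.ofReal_mul (by positivity : (0:ℝ) ≤ α / 2)]
    have htot : ∫⁻ x, h' x ∂γ ≤ B := by
      calc ∫⁻ x, h' x ∂γ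
          = ∫⁻ x, h' x ∂(M.map (fun θ => (θ, θ)))
            + ∫⁻ x, h' x ∂(C⁻¹ • (F.prod G)) := by
            rw [hγdef, lintegral_add_measure]
        _ = 0 + C⁻¹ * ∫⁻ x, h' x ∂(F.prod G) := by rw [hL1, lintegral_smul_measure, smul_eq_mul]
        _ ≤ 0 + C⁻¹ * ((∫⁻ θ, ENNReal.ofReal (φ θ) ∂F) * C) :=
            add_le_add_right (mul_le_mul_right hL2 _) 0
        _ = ∫⁻ θ, ENNReal.ofReal (φ θ) ∂F := by
            rw [zero_add, mul_comm (∫⁻ θ, ENNReal.ofReal (φ θ) ∂F) C, ← mul_assoc,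
              ENNReal.inv_mul_cancel hC0 hC_ne_top, one_mul]
        _ ≤ B := hKB
    have hB_ne_top : B ≠ ⊤ := by
      rw [hB_eq]
      exact ENNReal.mul_ne_top ENNReal.ofReal_ne_top hfin.ne
    have hfinal : (∫⁻ x, h' x ∂γ).toReal ≤ B.toReal := ENNReal.toReal_mono hB_ne_top htot
    rw [hRHS_eq]
    have hBtoReal : B.toReal = α / 2 * (∫⁻ θ in S, ENNReal.ofReal (ψ θ)).toReal := by
      rw [hB_eq, ENNReal.toReal_mul, ENNReal.toReal_ofReal (by positivity)]
    calc (∫⁻ x, h' x ∂γ).toReal ≤ B.toReal := hfinal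
      _ = α / 2 * (∫⁻ θ in S, ENNReal.ofReal (ψ θ)).toReal := hBtoReal
      _ = α * (1 / 2 * (∫⁻ θ in S, ENNReal.ofReal (ψ θ)).toReal) := by ring
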